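/- Let F be the Lévy measure of a bilateral Gamma process with parameters α⁺, λ⁺, α⁻, λ⁻ > 0 and assume λ⁺ > 2. Then ∫_ℝ (e^x − 1)² F(dx) = Ψ(2) − 2Ψ(1) > 0, where Ψ(z) = α⁺ ln(λ⁺/(λ⁺ − z)) + α⁻ ln(λ⁻/(λ⁻ + z)). -/

import Mathlib

open Real Set MeasureTheory intervalIntegral

/-- The density of the Lévy measure of a bilateral Gamma process. -/
noncomputable def bilateralGammaLevyDensity (ap lp am lm : ℝ) (x : ℝ) : ℝ :=
  if 0 < x then ap / x * Real.exp (-lp * x)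
  else if x < 0 then am / |x| * Real.exp (-lm * |x|)
  else 0

/-- The cumulant generating function of a bilateral Gamma distribution. -/
noncomputable def bilateralGammaCGF (ap lp am lm z : ℝ) : ℝ :=
  ap * Real.log (lp / (lp - z)) + am * Real.log (lm / (lm + z))

lemma frullani_integrableOn {a b : ℝ} (ha : 0 < a) (hab : a ≤ b) :
    IntegrableOn (fun x => (Real.exp (-(a*x)) - Real.exp (-(b*x))) / x) (Ioi (0:ℝ)) := by
  apply Integrable.mono' (g := fun x => (b - a) * Real.exp (-(a*x)))
    (by simpa [neg_mul] using ((exp_neg_integrableOn_Ioi 0 ha).const_mul (b - a)))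
  · apply Measurable.aestronglyMeasurable; fun_prop
  · filter_upwards [ae_restrict_mem measurableSet_Ioi] with x hx
    have hx : 0 < x := hx
    have hnum : 0 ≤ Real.exp (-(a*x)) - Real.exp (-(b*x)) := by
      have : -(b*x) ≤ -(a*x) := by nlinarith
      linarith [Real.exp_le_exp.2 this]
    have h1 : Real.exp (-(b*x)) = Real.exp (-(a*x)) * Real.exp (-((b-a)*x)) := by
      rw [← Real.exp_add]; ring_nf
    have h2 : 1 - Real.exp (-((b-a)*x)) ≤ (b-a)*x := by
      have := Real.add_one_le_exp (-((b-a)*x)); linarith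
    rw [Real.norm_eq_abs, abs_div, abs_of_nonneg hnum, abs_of_pos hx, div_le_iff₀ hx]
    have hep := Real.exp_pos (-(a*x))
    nlinarith [mul_le_mul_of_nonneg_left h2 hep.le]

lemma frullani {a b : ℝ} (ha : 0 < a) (hab : a ≤ b) :
    ∫ x in Ioi (0:ℝ), (Real.exp (-(a*x)) - Real.exp (-(b*x))) / x
      = Real.log b - Real.log a := by
  have hb : 0 < b := ha.trans_le hab
  have hprod : Integrable (Function.uncurry fun (x t : ℝ) => Real.exp (-(t * x)))
      ((volume.restrict (Ioi (0:ℝ))).prod (volume.restrict (Icc a b))) := by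
    have hg : Integrable (fun z : ℝ × ℝ => Real.exp (-a * z.1) * 1)
        ((volume.restrict (Ioi (0:ℝ))).prod (volume.restrict (Icc a b))) :=
      (exp_neg_integrableOn_Ioi 0 ha).mul_prod
        (integrableOn_const measure_Icc_lt_top.ne)
    apply hg.mono'
    · apply Measurable.aestronglyMeasurable; fun_prop
    · rw [Measure.prod_restrict]
      filter_upwards [ae_restrict_mem (measurableSet_Ioi.prod measurableSet_Icc)]
        with z hz
      obtain ⟨hz1, hz2, _⟩ := hz
      simp only [Function.uncurry, Real.norm_eq_abs, Real.abs_exp, mul_one]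
      apply Real.exp_le_exp.2
      have : (0:ℝ) < z.1 := hz1
      nlinarith
  have swap := integral_integral_swap hprod
  have hinner : ∀ x ∈ Ioi (0:ℝ), (∫ t in Icc a b, Real.exp (-(t*x)))
      = (Real.exp (-(a*x)) - Real.exp (-(b*x)))/x := by
    intro x hx
    have hx : 0 < x := hx
    rw [integral_Icc_eq_integral_Ioc, ← integral_of_le hab]
    have : ∀ t : ℝ, Real.exp (-(t*x)) = Real.exp (t * (-x)) := by intro t; ring_nf
    simp_rw [this]
    rw [integral_comp_mul_right Real.exp (neg_ne_zero.2 hx.ne'), integral_exp, smul_eq_mul,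
      show b * -x = -(b*x) by ring, show a * -x = -(a*x) by ring, inv_neg, neg_mul, ← mul_neg, neg_sub,
      div_eq_inv_mul]
  have houter : ∀ t ∈ Icc a b, (∫ x in Ioi (0:ℝ), Real.exp (-(t*x))) = t⁻¹ := by
    intro t ht
    have htpos : 0 < t := lt_of_lt_of_le ha ht.1
    have h := integral_comp_mul_left_Ioi (fun y => Real.exp (-y)) 0 htpos
    simp only [mul_zero, integral_exp_neg_Ioi, neg_zero, Real.exp_zero, smul_eq_mul,
      mul_one] at h
    exact h
  calc ∫ x in Ioi (0:ℝ), (Real.exp (-(a*x)) - Real.exp (-(b*x))) / x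
      = ∫ x in Ioi (0:ℝ), ∫ t in Icc a b, Real.exp (-(t*x)) := by
        exact (setIntegral_congr_fun measurableSet_Ioi hinner).symm
    _ = ∫ t in Icc a b, ∫ x in Ioi (0:ℝ), Real.exp (-(t*x)) := swap
    _ = ∫ t in Icc a b, t⁻¹ := setIntegral_congr_fun measurableSet_Icc houter
    _ = Real.log b - Real.log a := by
        rw [integral_Icc_eq_integral_Ioc, ← integral_of_le hab,
          integral_inv (by
            rw [uIcc_of_le hab]; intro h; exact absurd h.1 (not_le.2 ha)),
          Real.log_div hb.ne' ha.ne']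

theorem bilateral_gamma_levy_integral_sq
    (ap lp am lm : ℝ)
    (hap : 0 < ap) (hlp : 0 < lp) (ham : 0 < am) (hlm : 0 < lm)
    (hlp2 : 2 < lp) :
    (∫ x : ℝ, (Real.exp x - 1) ^ 2 * bilateralGammaLevyDensity ap lp am lm x =
      bilateralGammaCGF ap lp am lm 2 - 2 * bilateralGammaCGF ap lp am lm 1) ∧
    0 < bilateralGammaCGF ap lp am lm 2 - 2 * bilateralGammaCGF ap lp am lm 1 := by
  have h2p : (0:ℝ) < lp - 2 := by linarith
  have h1p : (0:ℝ) < lp - 1 := by linarith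
  set f := fun x : ℝ => (Real.exp x - 1) ^ 2 * bilateralGammaLevyDensity ap lp am lm x with hf
  have hpos_eq : ∀ x ∈ Ioi (0:ℝ), f x =
      ap * ((Real.exp (-((lp-2)*x)) - Real.exp (-((lp-1)*x)))/x
        - (Real.exp (-((lp-1)*x)) - Real.exp (-(lp*x)))/x) := by
    intro x hx
    have hx : 0 < x := hx
    simp only [hf, bilateralGammaLevyDensity, if_pos hx]
    have e2 : Real.exp (-((lp-2)*x)) = Real.exp (-lp*x) * Real.exp x * Real.exp x := by
      rw [← Real.exp_add, ← Real.exp_add]; congr 1; ring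
    have e1 : Real.exp (-((lp-1)*x)) = Real.exp (-lp*x) * Real.exp x := by
      rw [← Real.exp_add]; congr 1; ring
    have e0 : Real.exp (-(lp*x)) = Real.exp (-lp*x) := by rw [neg_mul]
    rw [e1, e2, e0]
    field_simp
  have hIpos : IntegrableOn f (Ioi (0:ℝ)) := by
    apply IntegrableOn.congr_fun _ (fun x hx => (hpos_eq x hx).symm) measurableSet_Ioi
    exact ((frullani_integrableOn (a := lp-2) (b := lp-1) h2p (by linarith)).sub
      (frullani_integrableOn (a := lp-1) (b := lp) h1p (by linarith))).const_mul ap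
  have hpos_int : ∫ x in Ioi (0:ℝ), f x
      = ap * ((Real.log (lp-1) - Real.log (lp-2)) - (Real.log lp - Real.log (lp-1))) := by
    rw [setIntegral_congr_fun measurableSet_Ioi hpos_eq, MeasureTheory.integral_const_mul,
      integral_sub (frullani_integrableOn (a := lp-2) (b := lp-1) h2p (by linarith))
        (frullani_integrableOn (a := lp-1) (b := lp) h1p (by linarith)),
      frullani h2p (by linarith), frullani h1p (by linarith)]
  have hneg_eq : ∀ x ∈ Ioi (0:ℝ), f (-x) =
      am * ((Real.exp (-(lm*x)) - Real.exp (-((lm+1)*x)))/x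
        - (Real.exp (-((lm+1)*x)) - Real.exp (-((lm+2)*x)))/x) := by
    intro x hx
    have hx : 0 < x := hx
    simp only [hf, bilateralGammaLevyDensity]
    rw [if_neg (by linarith), if_pos (by linarith : -x < (0:ℝ)), abs_neg, abs_of_pos hx]
    have e1 : Real.exp (-((lm+1)*x)) = Real.exp (-lm*x) * Real.exp (-x) := by
      rw [← Real.exp_add]; congr 1; ring
    have e2 : Real.exp (-((lm+2)*x))
        = Real.exp (-lm*x) * Real.exp (-x) * Real.exp (-x) := by
      rw [← Real.exp_add, ← Real.exp_add]; congr 1; ring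
    have e0 : Real.exp (-(lm*x)) = Real.exp (-lm*x) := by rw [neg_mul]
    rw [e1, e2, e0]
    field_simp
    ring
  have hIneg' : IntegrableOn (fun x => f (-x)) (Ioi (0:ℝ)) := by
    apply IntegrableOn.congr_fun _ (fun x hx => (hneg_eq x hx).symm) measurableSet_Ioi
    exact ((frullani_integrableOn (a := lm) (b := lm+1) hlm (by linarith)).sub
      (frullani_integrableOn (a := lm+1) (b := lm+2) (by linarith) (by linarith))).const_mul am
  have hIneg : IntegrableOn f (Iio (0:ℝ)) := by
    rw [← (Measure.measurePreserving_neg (volume : Measure ℝ)).integrableOn_comp_preimage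
        (Homeomorph.neg ℝ).measurableEmbedding]
    simp only [neg_preimage, neg_Iio, neg_zero]
    exact hIneg'
  have hneg_int : ∫ x in Iio (0:ℝ), f x
      = am * ((Real.log (lm+1) - Real.log lm) - (Real.log (lm+2) - Real.log (lm+1))) := by
    have h := integral_comp_neg_Ioi 0 f
    rw [neg_zero] at h
    rw [← integral_Iic_eq_integral_Iio, ← h,
      setIntegral_congr_fun measurableSet_Ioi hneg_eq, MeasureTheory.integral_const_mul,
      integral_sub (frullani_integrableOn (a := lm) (b := lm+1) hlm (by linarith))
        (frullani_integrableOn (a := lm+1) (b := lm+2) (by linarith) (by linarith)),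
      frullani hlm (by linarith), frullani (by linarith : (0:ℝ) < lm+1) (by linarith)]
  have hIci : IntegrableOn f (Ici (0:ℝ)) := (integrableOn_Ici_iff_integrableOn_Ioi (f := f) (b := 0) enorm_ne_top).2 hIpos
  have htotal : ∫ x, f x = (∫ x in Iio (0:ℝ), f x) + ∫ x in Ici (0:ℝ), f x :=
    (integral_Iio_add_Ici hIneg hIci).symm
  have key : bilateralGammaCGF ap lp am lm 2 - 2 * bilateralGammaCGF ap lp am lm 1
      = ap * (2*Real.log (lp-1) - Real.log (lp-2) - Real.log lp)
        + am * (2*Real.log (lm+1) - Real.log lm - Real.log (lm+2)) := by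
    simp only [bilateralGammaCGF]
    rw [Real.log_div hlp.ne' h2p.ne', Real.log_div hlm.ne' (by linarith : (lm+2:ℝ) ≠ 0),
      Real.log_div hlp.ne' h1p.ne', Real.log_div hlm.ne' (by linarith : (lm+1:ℝ) ≠ 0)]
    ring
  constructor
  · rw [htotal, integral_Ici_eq_integral_Ioi, hpos_int, hneg_int, key]; ring
  · rw [key]
    have hp : Real.log (lp-2) + Real.log lp < 2 * Real.log (lp-1) := by
      have hmul : (lp-2)*lp < (lp-1)^2 := by nlinarith
      have h := Real.log_lt_log (mul_pos h2p hlp) hmul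
      rw [Real.log_mul h2p.ne' hlp.ne'] at h
      rw [show ((lp-1)^2 : ℝ) = (lp-1)*(lp-1) by ring, Real.log_mul h1p.ne' h1p.ne'] at h
      linarith
    have hm : Real.log lm + Real.log (lm+2) < 2 * Real.log (lm+1) := by
      have hmul : lm*(lm+2) < (lm+1)^2 := by nlinarith
      have h := Real.log_lt_log (by positivity) hmul
      rw [Real.log_mul hlm.ne' (by linarith : (lm+2:ℝ) ≠ 0)] at h
      rw [show ((lm+1)^2 : ℝ) = (lm+1)*(lm+1) by ring,
        Real.log_mul (by linarith : (lm+1:ℝ) ≠ 0) (by linarith : (lm+1:ℝ) ≠ 0)] at h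
      linarith
    have h1 := mul_pos hap (show (0:ℝ) < 2*Real.log (lp-1) - Real.log (lp-2) - Real.log lp by linarith)
    have h2 := mul_pos ham (show (0:ℝ) < 2*Real.log (lm+1) - Real.log lm - Real.log (lm+2) by linarith)
    linarith
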